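/- Let S be a compact subset of ℝ, M_1(S) the space of Borel probability measures on S with the weak topology, and let Z_1, Z_2, … be i.i.d. random Borel probability measures on S with mean measure ν_0 (E[Z_1(B)] = ν_0(B) for Borel B). For each n, let (X_{n1}, …, X_{nn}) be a random vector with X_{ni} ≥ 0 and Σ_{i=1}^n X_{ni} = 1, independent of (Z_1, Z_2, …), and set 𝒲_n = Σ_{i=1}^n X_{ni} Z_i. If lim_{n→∞} E[ Σ_{i=1}^n X_{ni}² ] = 0, then 𝒲_n converges to ν_0 in probability in M_1(S); in particular, for every continuous f : S → ℝ and every ε > 0, P( |Σ_{i=1}^n X_{ni} ⟨Z_i, f⟩ − ⟨ν_0, f⟩| ≥ ε ) → 0 as n → ∞. -/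

import Mathlib

open MeasureTheory ProbabilityTheory Filter Topology
open scoped ENNReal NNReal

/-- Let S ⊆ ℝ be compact, Z₁, Z₂, … i.i.d. random Borel probability
measures on S with mean measure ν₀, and for each n let (X_{n1},…,X_{nn}) be a nonnegative
random vector summing to 1, independent of the Z's; set 𝒲_n = Σ_{i<n} X_{ni} Z_i. If
`E[Σ_{i<n} X_{ni}²] → 0`, then 𝒲_n → ν₀ in probability in M₁(S); in particular, for every
continuous f : S → ℝ and ε > 0, `P(|Σ_{i<n} X_{ni}⟨Z_i,f⟩ − ⟨ν₀,f⟩| ≥ ε) → 0`. -/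
theorem stmt_19 {Ω : Type*} [MeasurableSpace Ω] (P : Measure Ω) [IsProbabilityMeasure P]
    (S : Set ℝ) (hS : IsCompact S)
    (Z : ℕ → Ω → Measure S)
    (hZmeas : ∀ i, Measurable (Z i))
    (hZprob : ∀ i ω, IsProbabilityMeasure (Z i ω))
    (hZindep : iIndepFun Z P)
    (hZident : ∀ i j, Measure.map (Z i) P = Measure.map (Z j) P)
    (ν₀ : Measure S) [IsProbabilityMeasure ν₀]
    (hmean : ∀ i, ∀ B : Set S, MeasurableSet B → ∫⁻ ω, Z i ω B ∂P = ν₀ B)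
    (X : ℕ → ℕ → Ω → ℝ)
    (hXmeas : ∀ n i, Measurable (X n i))
    (hX0 : ∀ n i ω, 0 ≤ X n i ω)
    (hXsum : ∀ n, 0 < n → ∀ ω, ∑ i ∈ Finset.range n, X n i ω = 1)
    (hindep : ∀ n, IndepFun (fun ω => fun i => X n i ω) (fun ω => fun i => Z i ω) P)
    (hvar : Tendsto (fun n => ∫ ω, (∑ i ∈ Finset.range n, (X n i ω) ^ 2) ∂P)
      atTop (𝓝 0)) :
    ∀ f : S → ℝ, Continuous f → ∀ ε : ℝ, 0 < ε →
      Tendsto (fun n => P {ω |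
          ε ≤ |(∑ i ∈ Finset.range n, X n i ω * ∫ x, f x ∂(Z i ω)) - ∫ x, f x ∂ν₀|})
        atTop (𝓝 0) := by
  intro f hf ε hε
  haveI : CompactSpace S := isCompact_iff_compactSpace.mp hS
  obtain ⟨C, hC0, hC⟩ : ∃ C : ℝ, 0 ≤ C ∧ ∀ x, |f x| ≤ C := by
    obtain ⟨C, hC⟩ := (isCompact_range (hf.abs)).bddAbove
    exact ⟨max C 0, le_max_right _ _, fun x => le_trans (hC ⟨x, rfl⟩) (le_max_left _ _)⟩
  have hfmeas : Measurable f := hf.measurable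
  have hfint : ∀ (μ : Measure S) [IsProbabilityMeasure μ], Integrable f μ := fun μ _ =>
    (integrable_const C).mono' hfmeas.aestronglyMeasurable (ae_of_all _ fun x => hC x)
  have hbdd_int : ∀ (h : Ω → ℝ) (c : ℝ), Measurable h → (∀ ω, |h ω| ≤ c) → Integrable h P :=
    fun h c hm hb => (integrable_const c).mono' hm.aestronglyMeasurable (ae_of_all _ hb)
  set m : ℝ := ∫ x, f x ∂ν₀ with hm
  have hmbdd : |m| ≤ C := by
    have := norm_integral_le_of_norm_le_const (μ := ν₀) (f := f) (C := C)
      (ae_of_all _ fun x => hC x)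
    simpa using this
  -- positive and negative parts
  set Fp : S → ℝ≥0∞ := fun x => ENNReal.ofReal (f x) with hFp
  set Fn : S → ℝ≥0∞ := fun x => ENNReal.ofReal (-(f x)) with hFn
  have hFpmeas : Measurable Fp := ENNReal.measurable_ofReal.comp hfmeas
  have hFnmeas : Measurable Fn := ENNReal.measurable_ofReal.comp hfmeas.neg
  have hposneg : ∀ (μ : Measure S) [IsProbabilityMeasure μ],
      ∫ x, f x ∂μ = (∫⁻ x, Fp x ∂μ).toReal - (∫⁻ x, Fn x ∂μ).toReal := fun μ _ =>
    integral_eq_lintegral_pos_part_sub_lintegral_neg_part (hfint μ)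
  -- the centered evaluation functional
  set φ : Measure S → ℝ :=
    fun μ => ((∫⁻ x, Fp x ∂μ).toReal - (∫⁻ x, Fn x ∂μ).toReal) - m with hφdef
  have hφmeas : Measurable φ :=
    (((Measure.measurable_lintegral hFpmeas).ennreal_toReal.sub
      (Measure.measurable_lintegral hFnmeas).ennreal_toReal).sub measurable_const)
  have hφZ : ∀ i ω, φ (Z i ω) = (∫ x, f x ∂(Z i ω)) - m := by
    intro i ω
    haveI := hZprob i ω
    rw [hφdef]
    simp only [← hposneg (Z i ω)]
  set Y : ℕ → Ω → ℝ := fun i ω => φ (Z i ω) with hY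
  have hYmeas : ∀ i, Measurable (Y i) := fun i => hφmeas.comp (hZmeas i)
  have hYbdd : ∀ i ω, |Y i ω| ≤ 2 * C := by
    intro i ω
    haveI := hZprob i ω
    rw [hY]; simp only [hφZ i ω]
    have h1 : |∫ x, f x ∂(Z i ω)| ≤ C := by
      have := norm_integral_le_of_norm_le_const (μ := Z i ω) (f := f) (C := C)
        (ae_of_all _ fun x => hC x)
      simpa using this
    calc |(∫ x, f x ∂(Z i ω)) - m| ≤ |∫ x, f x ∂(Z i ω)| + |m| := abs_sub _ _
      _ ≤ C + C := add_le_add h1 hmbdd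
      _ = 2 * C := by ring
  have hYint : ∀ i, Integrable (Y i) P := fun i => hbdd_int _ _ (hYmeas i) (hYbdd i)
  -- mean measure via bind
  have hbind : ∀ i, P.bind (Z i) = ν₀ := fun i => Measure.ext fun B hB => by
    rw [Measure.bind_apply hB (hZmeas i).aemeasurable]; exact hmean i B hB
  -- mean of ⟨Z i, f⟩ is m
  have hAle : ∀ i ω, ∫⁻ x, Fp x ∂(Z i ω) ≤ ENNReal.ofReal C := by
    intro i ω
    haveI := hZprob i ω
    calc ∫⁻ x, Fp x ∂(Z i ω) ≤ ∫⁻ _, ENNReal.ofReal C ∂(Z i ω) :=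
          lintegral_mono fun x => ENNReal.ofReal_le_ofReal ((le_abs_self _).trans (hC x))
      _ = ENNReal.ofReal C := by simp
  have hBle : ∀ i ω, ∫⁻ x, Fn x ∂(Z i ω) ≤ ENNReal.ofReal C := by
    intro i ω
    haveI := hZprob i ω
    calc ∫⁻ x, Fn x ∂(Z i ω) ≤ ∫⁻ _, ENNReal.ofReal C ∂(Z i ω) :=
          lintegral_mono fun x => ENNReal.ofReal_le_ofReal ((neg_le_abs _).trans (hC x))
      _ = ENNReal.ofReal C := by simp
  have hgmean : ∀ i, ∫ ω, (∫ x, f x ∂(Z i ω)) ∂P = m := by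
    intro i
    have hAmeas : Measurable fun ω => ∫⁻ x, Fp x ∂(Z i ω) :=
      (Measure.measurable_lintegral hFpmeas).comp (hZmeas i)
    have hBmeas : Measurable fun ω => ∫⁻ x, Fn x ∂(Z i ω) :=
      (Measure.measurable_lintegral hFnmeas).comp (hZmeas i)
    have hAfin : ∀ ω, ∫⁻ x, Fp x ∂(Z i ω) < ∞ :=
      fun ω => lt_of_le_of_lt (hAle i ω) ENNReal.ofReal_lt_top
    have hBfin : ∀ ω, ∫⁻ x, Fn x ∂(Z i ω) < ∞ :=
      fun ω => lt_of_le_of_lt (hBle i ω) ENNReal.ofReal_lt_top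
    have hAint : Integrable (fun ω => (∫⁻ x, Fp x ∂(Z i ω)).toReal) P := by
      apply hbdd_int _ C hAmeas.ennreal_toReal
      intro ω
      rw [abs_of_nonneg ENNReal.toReal_nonneg]
      calc (∫⁻ x, Fp x ∂(Z i ω)).toReal ≤ (ENNReal.ofReal C).toReal :=
            ENNReal.toReal_mono ENNReal.ofReal_ne_top (hAle i ω)
        _ = C := ENNReal.toReal_ofReal hC0
    have hBint : Integrable (fun ω => (∫⁻ x, Fn x ∂(Z i ω)).toReal) P := by
      apply hbdd_int _ C hBmeas.ennreal_toReal
      intro ω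
      rw [abs_of_nonneg ENNReal.toReal_nonneg]
      calc (∫⁻ x, Fn x ∂(Z i ω)).toReal ≤ (ENNReal.ofReal C).toReal :=
            ENNReal.toReal_mono ENNReal.ofReal_ne_top (hBle i ω)
        _ = C := ENNReal.toReal_ofReal hC0
    have heq : (fun ω => ∫ x, f x ∂(Z i ω)) =
        fun ω => (∫⁻ x, Fp x ∂(Z i ω)).toReal - (∫⁻ x, Fn x ∂(Z i ω)).toReal := by
      funext ω; haveI := hZprob i ω; exact hposneg (Z i ω)
    rw [heq, integral_sub hAint hBint,
      integral_toReal hAmeas.aemeasurable (ae_of_all _ hAfin),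
      integral_toReal hBmeas.aemeasurable (ae_of_all _ hBfin),
      ← Measure.lintegral_bind (hZmeas i).aemeasurable hFpmeas.aemeasurable, ← Measure.lintegral_bind (hZmeas i).aemeasurable hFnmeas.aemeasurable,
      hbind i, hm, hposneg ν₀]
  have hYmean : ∀ i, ∫ ω, Y i ω ∂P = 0 := by
    intro i
    have : (fun ω => Y i ω) = fun ω => (∫ x, f x ∂(Z i ω)) - m := by
      funext ω; exact hφZ i ω
    rw [this, integral_sub ?_ (integrable_const m), hgmean i, integral_const]
    · simp
    · apply hbdd_int _ C
      · have : (fun ω => ∫ x, f x ∂(Z i ω)) = fun ω => Y i ω + m := by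
          funext ω; rw [hY]; simp only [hφZ i ω]; ring
        rw [this]; exact (hYmeas i).add measurable_const
      · intro ω
        haveI := hZprob i ω
        have h2 := norm_integral_le_of_norm_le_const (μ := Z i ω) (f := f) (C := C)
          (ae_of_all _ fun x => hC x)
        simpa using h2
  -- off-diagonal second moments vanish
  have hYY : ∀ i j, i ≠ j → ∫ ω, Y i ω * Y j ω ∂P = 0 := by
    intro i j hij
    have h1 : IndepFun (Z i) (Z j) P := hZindep.indepFun hij
    have h2 : IndepFun (Y i) (Y j) P := h1.comp hφmeas hφmeas
    rw [h2.integral_fun_mul_eq_mul_integral (hYmeas i).aestronglyMeasurable (hYmeas j).aestronglyMeasurable,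
      hYmean i, zero_mul]
  -- independence of X-products and Y-products
  have hcross : ∀ n i j, ∫ ω, (X n i ω * X n j ω) * (Y i ω * Y j ω) ∂P
      = (∫ ω, X n i ω * X n j ω ∂P) * (∫ ω, Y i ω * Y j ω ∂P) := by
    intro n i j
    have hξ : Measurable (fun v : ℕ → ℝ => v i * v j) :=
      (measurable_pi_apply i).mul (measurable_pi_apply j)
    have hζ : Measurable (fun w : ℕ → Measure S => φ (w i) * φ (w j)) :=
      (hφmeas.comp (measurable_pi_apply i)).mul (hφmeas.comp (measurable_pi_apply j))
    have h1 : IndepFun (fun ω => X n i ω * X n j ω) (fun ω => Y i ω * Y j ω) P :=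
      (hindep n).comp hξ hζ
    exact h1.integral_fun_mul_eq_mul_integral ((hXmeas n i).mul (hXmeas n j)).aestronglyMeasurable
      ((hYmeas i).mul (hYmeas j)).aestronglyMeasurable
  -- the weighted centered sum
  set T : ℕ → Ω → ℝ := fun n ω => ∑ i ∈ Finset.range n, X n i ω * Y i ω with hT
  have hTmeas : ∀ n, Measurable (T n) := fun n =>
    Finset.measurable_sum _ fun i _ => (hXmeas n i).mul (hYmeas i)
  have hXle1 : ∀ n, 0 < n → ∀ i ∈ Finset.range n, ∀ ω, X n i ω ≤ 1 := by
    intro n hn i hi ω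
    rw [← hXsum n hn ω]
    exact Finset.single_le_sum (fun j _ => hX0 n j ω) hi
  set v : ℕ → ℝ := fun n => ∫ ω, (∑ i ∈ Finset.range n, (X n i ω)^2) ∂P with hv
  have hXXint : ∀ n, 0 < n → ∀ i ∈ Finset.range n, ∀ j ∈ Finset.range n,
      Integrable (fun ω => X n i ω * X n j ω) P := by
    intro n hn i hi j hj
    apply hbdd_int _ 1 ((hXmeas n i).mul (hXmeas n j))
    intro ω
    simp only [Pi.mul_apply]
    rw [abs_of_nonneg (mul_nonneg (hX0 n i ω) (hX0 n j ω))]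
    calc X n i ω * X n j ω ≤ 1 * 1 :=
          mul_le_mul (hXle1 n hn i hi ω) (hXle1 n hn j hj ω) (hX0 n j ω) one_pos.le
      _ = 1 := one_mul 1
  have hterm_int : ∀ n, 0 < n → ∀ i ∈ Finset.range n, ∀ j ∈ Finset.range n,
      Integrable (fun ω => (X n i ω * Y i ω) * (X n j ω * Y j ω)) P := by
    intro n hn i hi j hj
    apply hbdd_int _ ((2*C)*(2*C))
      (((hXmeas n i).mul (hYmeas i)).mul ((hXmeas n j).mul (hYmeas j)))
    intro ω
    simp only [Pi.mul_apply]
    rw [abs_mul, abs_mul, abs_mul]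
    have h1 : |X n i ω| * |Y i ω| ≤ 2*C := by
      rw [abs_of_nonneg (hX0 n i ω)]
      calc X n i ω * |Y i ω| ≤ 1 * (2*C) :=
            mul_le_mul (hXle1 n hn i hi ω) (hYbdd i ω) (abs_nonneg _) one_pos.le
        _ = 2*C := one_mul _
    have h2 : |X n j ω| * |Y j ω| ≤ 2*C := by
      rw [abs_of_nonneg (hX0 n j ω)]
      calc X n j ω * |Y j ω| ≤ 1 * (2*C) :=
            mul_le_mul (hXle1 n hn j hj ω) (hYbdd j ω) (abs_nonneg _) one_pos.le
        _ = 2*C := one_mul _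
    exact mul_le_mul h1 h2 (mul_nonneg (abs_nonneg _) (abs_nonneg _)) (by positivity)
  have hYsq : ∀ i, ∫ ω, Y i ω * Y i ω ∂P ≤ 4 * C^2 := by
    intro i
    have hint : Integrable (fun ω => Y i ω * Y i ω) P := by
      apply hbdd_int _ (4*C^2) ((hYmeas i).mul (hYmeas i))
      intro ω
      simp only [Pi.mul_apply]
      rw [abs_mul]
      calc |Y i ω| * |Y i ω| ≤ (2*C) * (2*C) :=
            mul_le_mul (hYbdd i ω) (hYbdd i ω) (abs_nonneg _) (by positivity)
        _ = 4*C^2 := by ring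
    calc ∫ ω, Y i ω * Y i ω ∂P ≤ ∫ _, 4*C^2 ∂P := by
          apply integral_mono hint (integrable_const _)
          intro ω
          calc Y i ω * Y i ω = |Y i ω| * |Y i ω| := (abs_mul_abs_self _).symm
            _ ≤ (2*C) * (2*C) :=
                mul_le_mul (hYbdd i ω) (hYbdd i ω) (abs_nonneg _) (by positivity)
            _ = 4*C^2 := by ring
      _ = 4*C^2 := by simp
  have hTsq : ∀ n, 0 < n → ∫ ω, (T n ω)^2 ∂P ≤ 4 * C^2 * v n := by
    intro n hn
    have hexp : ∀ ω, (T n ω)^2 = ∑ i ∈ Finset.range n, ∑ j ∈ Finset.range n,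
        (X n i ω * Y i ω) * (X n j ω * Y j ω) := by
      intro ω; rw [hT, sq, Finset.sum_mul_sum]
    calc ∫ ω, (T n ω)^2 ∂P
        = ∑ i ∈ Finset.range n, ∑ j ∈ Finset.range n,
            ∫ ω, (X n i ω * Y i ω) * (X n j ω * Y j ω) ∂P := by
          simp_rw [hexp]
          rw [integral_finset_sum _ (fun i hi =>
            integrable_finset_sum _ (fun j hj => hterm_int n hn i hi j hj))]
          exact Finset.sum_congr rfl fun i hi =>
            integral_finset_sum _ fun j hj => hterm_int n hn i hi j hj
      _ = ∑ i ∈ Finset.range n,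
            (∫ ω, X n i ω * X n i ω ∂P) * (∫ ω, Y i ω * Y i ω ∂P) := by
          apply Finset.sum_congr rfl; intro i hi
          rw [Finset.sum_eq_single i]
          · rw [← hcross n i i]
            congr 1; funext ω; ring
          · intro j hj hji
            have hrw : (fun ω => (X n i ω * Y i ω) * (X n j ω * Y j ω))
                = fun ω => (X n i ω * X n j ω) * (Y i ω * Y j ω) := by
              funext ω; ring
            rw [hrw, hcross n i j, hYY i j (Ne.symm hji), mul_zero]
          · intro h; exact absurd hi h
      _ ≤ ∑ i ∈ Finset.range n, (∫ ω, X n i ω * X n i ω ∂P) * (4*C^2) := by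
          apply Finset.sum_le_sum; intro i hi
          exact mul_le_mul_of_nonneg_left (hYsq i)
            (integral_nonneg fun ω => mul_self_nonneg _)
      _ = (∑ i ∈ Finset.range n, ∫ ω, (X n i ω)^2 ∂P) * (4*C^2) := by
          rw [← Finset.sum_mul]
          congr 1
          exact Finset.sum_congr rfl fun i hi => by congr 1; funext ω; rw [sq]
      _ = 4 * C^2 * v n := by
          rw [hv]
          rw [← integral_finset_sum _ (fun i hi => by
            have := hXXint n hn i hi i hi
            simpa [sq] using this)]
          ring
  have hTbdd : ∀ n, 0 < n → ∀ ω, |T n ω| ≤ 2*C := by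
    intro n hn ω
    calc |T n ω| ≤ ∑ i ∈ Finset.range n, |X n i ω * Y i ω| :=
          Finset.abs_sum_le_sum_abs _ _
      _ ≤ ∑ i ∈ Finset.range n, X n i ω * (2*C) := by
          apply Finset.sum_le_sum; intro i hi
          rw [abs_mul, abs_of_nonneg (hX0 n i ω)]
          exact mul_le_mul_of_nonneg_left (hYbdd i ω) (hX0 n i ω)
      _ = 2*C := by rw [← Finset.sum_mul, hXsum n hn ω, one_mul]
  have hTsq_int : ∀ n, 0 < n → Integrable (fun ω => (T n ω)^2) P := by
    intro n hn
    apply hbdd_int _ ((2*C)^2) ((hTmeas n).pow_const 2)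
    intro ω
    rw [abs_of_nonneg (sq_nonneg _), ← sq_abs]
    exact pow_le_pow_left₀ (abs_nonneg _) (hTbdd n hn ω) 2
  -- Chebyshev
  have cheb : ∀ n, 0 < n →
      P {ω | ε ≤ |T n ω|} ≤ ENNReal.ofReal ((4 * C^2 * v n) / ε^2) := by
    intro n hn
    have hsub : {ω | ε ≤ |T n ω|} ⊆
        {ω | ENNReal.ofReal (ε^2) ≤ ENNReal.ofReal ((T n ω)^2)} := by
      intro ω hω
      simp only [Set.mem_setOf_eq] at hω ⊢
      apply ENNReal.ofReal_le_ofReal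
      calc ε^2 ≤ |T n ω|^2 := pow_le_pow_left₀ hε.le hω 2
        _ = (T n ω)^2 := sq_abs _
    have hmarkov := mul_meas_ge_le_lintegral₀ (μ := P)
      (f := fun ω => ENNReal.ofReal ((T n ω)^2))
      (ENNReal.measurable_ofReal.comp ((hTmeas n).pow_const 2)).aemeasurable
      (ENNReal.ofReal (ε^2))
    have hlint : ∫⁻ ω, ENNReal.ofReal ((T n ω)^2) ∂P
        = ENNReal.ofReal (∫ ω, (T n ω)^2 ∂P) :=
      (ofReal_integral_eq_lintegral_ofReal (hTsq_int n hn)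
        (ae_of_all _ fun ω => sq_nonneg _)).symm
    have hεne : ENNReal.ofReal (ε^2) ≠ 0 :=
      (ENNReal.ofReal_pos.mpr (by positivity)).ne'
    have h1 : P {ω | ε ≤ |T n ω|}
        ≤ ENNReal.ofReal (∫ ω, (T n ω)^2 ∂P) / ENNReal.ofReal (ε^2) := by
      rw [ENNReal.le_div_iff_mul_le (Or.inl hεne) (Or.inr ENNReal.ofReal_ne_top)]
      calc P {ω | ε ≤ |T n ω|} * ENNReal.ofReal (ε^2)
          = ENNReal.ofReal (ε^2) * P {ω | ε ≤ |T n ω|} := mul_comm _ _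
        _ ≤ ENNReal.ofReal (ε^2)
              * P {ω | ENNReal.ofReal (ε^2) ≤ ENNReal.ofReal ((T n ω)^2)} :=
            mul_le_mul_right (measure_mono hsub) _
        _ ≤ ∫⁻ ω, ENNReal.ofReal ((T n ω)^2) ∂P := hmarkov
        _ = ENNReal.ofReal (∫ ω, (T n ω)^2 ∂P) := hlint
    calc P {ω | ε ≤ |T n ω|}
        ≤ ENNReal.ofReal (∫ ω, (T n ω)^2 ∂P) / ENNReal.ofReal (ε^2) := h1
      _ = ENNReal.ofReal ((∫ ω, (T n ω)^2 ∂P) / ε^2) :=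
          (ENNReal.ofReal_div_of_pos (by positivity)).symm
      _ ≤ ENNReal.ofReal ((4 * C^2 * v n) / ε^2) := by
          apply ENNReal.ofReal_le_ofReal
          exact div_le_div_of_nonneg_right (hTsq n hn) (by positivity)
  -- the event rewritten
  have hset : ∀ n, 0 < n →
      {ω | ε ≤ |(∑ i ∈ Finset.range n, X n i ω * ∫ x, f x ∂(Z i ω)) - m|}
        = {ω | ε ≤ |T n ω|} := by
    intro n hn
    ext ω
    simp only [Set.mem_setOf_eq]
    have heq : (∑ i ∈ Finset.range n, X n i ω * ∫ x, f x ∂(Z i ω)) - m = T n ω := by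
      simp only [hT]
      have h2 : ∀ i ∈ Finset.range n,
          X n i ω * Y i ω = X n i ω * ∫ x, f x ∂(Z i ω) - X n i ω * m := by
        intro i _
        rw [hY]; simp only [hφZ i ω]; ring
      rw [Finset.sum_congr rfl h2, Finset.sum_sub_distrib, ← Finset.sum_mul,
        hXsum n hn ω, one_mul]
    rw [heq]
  -- conclusion
  have hupper : Tendsto (fun n => ENNReal.ofReal ((4 * C^2 * v n) / ε^2)) atTop (𝓝 0) := by
    have h1 : Tendsto (fun n => (4 * C^2 * v n) / ε^2) atTop (𝓝 0) := by
      have h2 := (hvar.const_mul (4 * C^2)).div_const (ε^2)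
      simpa using h2
    have h3 := (ENNReal.continuous_ofReal.tendsto 0).comp h1
    simpa [Function.comp_def] using h3
  apply tendsto_of_tendsto_of_tendsto_of_le_of_le'
    (tendsto_const_nhds : Tendsto (fun _ : ℕ => (0 : ℝ≥0∞)) atTop (𝓝 0)) hupper
  · exact Eventually.of_forall fun n => zero_le
  · filter_upwards [eventually_gt_atTop 0] with n hn
    rw [hset n hn]
    exact cheb n hn
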